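/- Let c₀ ∈ ℝ, k₀ ∈ ℝ with k₀ ≠ 0, and let a : ℝ → ℝ be a nonconstant, continuously differentiable, 1-periodic function with a(x) > 0 for all x. Then ∫₀¹ (d/dx)[a(x)⁻¹] · ( k₀·c₀²·a′(x) + (k₀/2)·(d/dx)[a(x)⁻²] ) dx = 0 if and only if c₀² = ( ∫₀¹ a(x)⁻⁵·a′(x)² dx ) / ( ∫₀¹ a(x)⁻²·a′(x)² dx ); moreover the denominator ∫₀¹ a(x)⁻²·a′(x)² dx is strictly positive. -/

import Mathlib

open MeasureTheory intervalIntegral Function Set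

/-- The selection (orthogonality) condition for persistence of a `1`-periodic
limiting profile holds iff `c₀²` equals the ratio of the two integrals; the
denominator is strictly positive. -/
theorem stmt_16 (c₀ k₀ : ℝ) (hk₀ : k₀ ≠ 0)
    (a : ℝ → ℝ) (ha : ContDiff ℝ 1 a) (hper : Function.Periodic a 1)
    (hpos : ∀ x, 0 < a x) (hnc : ∃ x y, a x ≠ a y) :
    ((∫ x in (0:ℝ)..1, deriv (fun y => (a y)⁻¹) x *
        (k₀ * c₀ ^ 2 * deriv a x + (k₀ / 2) * deriv (fun y => (a y ^ 2)⁻¹) x)) = 0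
      ↔ c₀ ^ 2 = (∫ x in (0:ℝ)..1, (a x ^ 5)⁻¹ * (deriv a x) ^ 2)
                  / (∫ x in (0:ℝ)..1, (a x ^ 2)⁻¹ * (deriv a x) ^ 2))
    ∧ 0 < ∫ x in (0:ℝ)..1, (a x ^ 2)⁻¹ * (deriv a x) ^ 2 := by
  have hd : Differentiable ℝ a := ha.differentiable one_ne_zero
  have hdc : Continuous (deriv a) := ha.continuous_deriv le_rfl
  have hac : Continuous a := ha.continuous
  -- periodicity of the derivative
  have hpd : Function.Periodic (deriv a) 1 := by
    intro x
    have : (fun y => a (y + 1)) = a := funext fun y => hper y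
    calc deriv a (x + 1) = deriv (fun y => a (y + 1)) x := (deriv_comp_add_const a 1 x).symm
    _ = deriv a x := by rw [this]
  -- derivative exists nonzero somewhere
  obtain ⟨z, hz⟩ : ∃ z, deriv a z ≠ 0 := by
    by_contra h
    push_neg at h
    obtain ⟨x, y, hxy⟩ := hnc
    exact hxy (is_const_of_deriv_eq_zero hd h x y)
  -- the function g
  set g : ℝ → ℝ := fun x => (a x ^ 2)⁻¹ * (deriv a x) ^ 2 with hg
  have hgc : Continuous g :=
    ((hac.pow 2).inv₀ (fun x => pow_ne_zero 2 (hpos x).ne')).mul (hdc.pow 2)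
  have hgnn : ∀ x, 0 ≤ g x := fun x => by positivity
  have hgper : Function.Periodic g 1 := fun x => by simp [hg, hper x, hpd x]
  have hgz : 0 < g z :=
    mul_pos (inv_pos.2 (pow_pos (hpos z) 2)) (pow_two_pos_of_ne_zero hz)
  -- positivity of the integral
  have hIpos : 0 < ∫ x in (0:ℝ)..1, g x := by
    have hshift : (∫ x in (0:ℝ)..1, g x) = ∫ x in (z - 1/2)..(z - 1/2 + 1), g x := by
      have := hgper.intervalIntegral_add_eq (z - 1/2) 0
      simpa using this.symm
    rw [hshift]
    have hle : z - 1/2 ≤ z - 1/2 + 1 := by linarith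
    rw [intervalIntegral.integral_of_le hle]
    refine (setIntegral_pos_iff_support_of_nonneg_ae ?_ ?_).2 ?_
    · exact Filter.Eventually.of_forall fun x => hgnn x
    · exact (hgc.integrableOn_Ioc)
    · have hopen : IsOpen ({x | 0 < g x} ∩ Ioo (z - 1/2) (z - 1/2 + 1)) :=
        (isOpen_lt continuous_const hgc).inter isOpen_Ioo
      have hz' : z ∈ {x | 0 < g x} ∩ Ioo (z - 1/2) (z - 1/2 + 1) :=
        ⟨hgz, by constructor <;> linarith⟩
      have hsub : {x | 0 < g x} ∩ Ioo (z - 1/2) (z - 1/2 + 1) ⊆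
          Function.support g ∩ Ioc (z - 1/2) (z - 1/2 + 1) := fun x hx =>
        ⟨ne_of_gt hx.1, hx.2.1, le_of_lt hx.2.2⟩
      exact lt_of_lt_of_le (hopen.measure_pos volume ⟨z, hz'⟩) (measure_mono hsub)
  refine ⟨?_, hIpos⟩
  -- pointwise identity for the integrand
  have hpt : ∀ x, deriv (fun y => (a y)⁻¹) x *
        (k₀ * c₀ ^ 2 * deriv a x + (k₀ / 2) * deriv (fun y => (a y ^ 2)⁻¹) x)
      = k₀ * ((a x ^ 5)⁻¹ * (deriv a x) ^ 2) - k₀ * c₀ ^ 2 * ((a x ^ 2)⁻¹ * (deriv a x) ^ 2) := by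
    intro x
    have hax := (hpos x).ne'
    have h1 : deriv (fun y => (a y)⁻¹) x = -deriv a x / a x ^ 2 :=
      (((hd x).hasDerivAt).inv hax).deriv
    have h2 : deriv (fun y => (a y ^ 2)⁻¹) x = -(2 * a x * deriv a x) / (a x ^ 2) ^ 2 := by
      have hp : HasDerivAt (fun y => a y ^ 2) (2 * a x ^ 1 * deriv a x) x := by
        simpa using ((hd x).hasDerivAt).fun_pow 2
      have := (hp.fun_inv (pow_ne_zero 2 hax)).deriv
      rw [this]; ring_nf
    rw [h1, h2]
    field_simp
    ring
  have hI5 : IntervalIntegrable (fun x => (a x ^ 5)⁻¹ * (deriv a x) ^ 2) volume 0 1 :=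
    (((hac.pow 5).inv₀ (fun x => pow_ne_zero 5 (hpos x).ne')).mul (hdc.pow 2)).intervalIntegrable 0 1
  have hI2 : IntervalIntegrable g volume 0 1 := hgc.intervalIntegrable 0 1
  have hI : (∫ x in (0:ℝ)..1, deriv (fun y => (a y)⁻¹) x *
        (k₀ * c₀ ^ 2 * deriv a x + (k₀ / 2) * deriv (fun y => (a y ^ 2)⁻¹) x))
      = k₀ * (∫ x in (0:ℝ)..1, (a x ^ 5)⁻¹ * (deriv a x) ^ 2)
        - k₀ * c₀ ^ 2 * (∫ x in (0:ℝ)..1, g x) := by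
    rw [show (fun x => deriv (fun y => (a y)⁻¹) x *
        (k₀ * c₀ ^ 2 * deriv a x + (k₀ / 2) * deriv (fun y => (a y ^ 2)⁻¹) x)) =
        fun x => k₀ * ((a x ^ 5)⁻¹ * (deriv a x) ^ 2) - k₀ * c₀ ^ 2 * g x
        from funext hpt]
    rw [intervalIntegral.integral_sub (hI5.const_mul k₀) (hI2.const_mul (k₀ * c₀ ^ 2)),
      intervalIntegral.integral_const_mul, intervalIntegral.integral_const_mul]
  rw [hI]
  rw [sub_eq_zero, eq_div_iff (ne_of_gt hIpos)]
  constructor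
  · intro h
    have h' : k₀ * ((∫ x in (0:ℝ)..1, (a x ^ 5)⁻¹ * (deriv a x) ^ 2)
        - c₀ ^ 2 * (∫ x in (0:ℝ)..1, g x)) = 0 := by linarith [h]
    have := (mul_eq_zero.1 h').resolve_left hk₀
    linarith [sub_eq_zero.1 this]
  · intro h
    rw [← h]
    ring
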